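/- Every metrizable locally convex space satisfies the strict Mackey convergence condition: for every bounded set A there exists a closed bounded disk D with A ⊆ D such that the topology of the normed space (E_D, ‖·‖_D) agrees with the topology of E on A. -/

import Mathlib

open Set Filter Bornology Pointwise Topology

variable {E : Type*} [AddCommGroup E] [Module ℝ E] [TopologicalSpace E]

/-- In a convex balanced set, the difference of two elements lies in twice the set. -/
lemma aux_sub_mem_two_smul {s : Set E} (hconv : Convex ℝ s) (hbal : Balanced ℝ s)
    {a b : E} (ha : a ∈ s) (hb : b ∈ s) : a - b ∈ (2 : ℝ) • s := by
  have hnb : -b ∈ s := (hbal.neg_mem_iff).2 hb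
  have hmid : (1/2 : ℝ) • a + (1/2 : ℝ) • (-b) ∈ s :=
    hconv ha hnb (by norm_num) (by norm_num) (by norm_num)
  refine ⟨(1/2 : ℝ) • a + (1/2 : ℝ) • (-b), hmid, ?_⟩
  simp [smul_add, smul_smul, sub_eq_add_neg]

/-- The topology of the gauge norm `‖·‖_D` agrees with the topology of `E` on the set
`A`: at every point of `A`, the induced neighborhood filters coincide. -/
def GaugeTopologyAgreesOn (D A : Set E) : Prop :=
  ∀ x ∈ A, ∀ U : Set E,
    (∃ ε > 0, {y | y ∈ A ∧ gauge D (y - x) < ε} ⊆ U) ↔ (∃ V ∈ nhds x, V ∩ A ⊆ U)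

/-- Every metrizable real locally convex space satisfies the strict Mackey convergence
condition: for every bounded set `A` there exists a closed bounded disk `D ⊇ A` such
that the topology of the normed space `(E_D, ‖·‖_D)` agrees with the topology of `E`
on `A`. -/
theorem metrizable_strict_mackey
    [IsTopologicalAddGroup E] [ContinuousSMul ℝ E] [LocallyConvexSpace ℝ E]
    [TopologicalSpace.MetrizableSpace E]
    (A : Set E) (hA : Bornology.IsVonNBounded ℝ A) :
    ∃ D : Set E, IsClosed D ∧ Bornology.IsVonNBounded ℝ D ∧ Convex ℝ D ∧
      Balanced ℝ D ∧ A ⊆ D ∧ GaugeTopologyAgreesOn D A := by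
  -- a countable antitone basis of neighborhoods of 0
  letI : TopologicalSpace.PseudoMetrizableSpace E :=
    TopologicalSpace.MetrizableSpace.toPseudoMetrizableSpace
  obtain ⟨B, hB⟩ := (𝓝 (0 : E)).exists_antitone_basis
  -- upgrade to closed absolutely convex neighborhoods
  have key : ∀ n : ℕ, ∃ U : Set E,
      IsClosed U ∧ Convex ℝ U ∧ Balanced ℝ U ∧ U ∈ 𝓝 (0 : E) ∧ U ⊆ B n := by
    intro n
    obtain ⟨V, hV, hVV⟩ := exists_nhds_zero_half (hB.mem n)
    obtain ⟨C, ⟨hC1, hCbal, hCconv⟩, hCV⟩ := (nhds_hasBasis_absConvex ℝ E).mem_iff.1 hV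
    refine ⟨closure C, isClosed_closure, hCconv.closure, hCbal.closure,
      mem_of_superset hC1 subset_closure, ?_⟩
    intro z hz
    obtain ⟨y, hyC, hy⟩ := mem_closure_iff_nhds_zero.1 hz C hC1
    have hz' : z = y + -(y - z) := by abel
    rw [hz']
    exact hVV y (hCV hyC) (-(y - z)) (hCV (hCbal.neg_mem_iff.2 hy))
  choose U hUcl hUconv hUbal hUnhd hUB using key
  -- absorb `A` in each `U n`
  have habs : ∀ n : ℕ, ∃ r > (0 : ℝ), ∀ c : ℝ, r ≤ ‖c‖ → A ⊆ c • U n := fun n =>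
    (hA (hUnhd n)).exists_pos
  choose ρ hρpos hρ using habs
  set lam : ℕ → ℝ := fun n => ((n : ℝ) + 1) * ρ n with hlam
  have hlampos : ∀ n, 0 < lam n := fun n =>
    mul_pos (by positivity) (hρpos n)
  set D : Set E := ⋂ n, lam n • U n with hD
  have hDsub : ∀ n, D ⊆ lam n • U n := fun n => iInter_subset _ n
  have hAsub : A ⊆ D := by
    refine subset_iInter fun n => ?_
    refine hρ n (lam n) ?_
    rw [Real.norm_eq_abs, abs_of_pos (hlampos n)]
    calc ρ n = 1 * ρ n := (one_mul _).symm
    _ ≤ ((n : ℝ) + 1) * ρ n := by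
      gcongr
      · exact (hρpos n).le
      · simp
  have hDbal : Balanced ℝ D := balanced_iInter fun n => (hUbal n).smul _
  have hDconv : Convex ℝ D := convex_iInter fun n => (hUconv n).smul _
  have hDcl : IsClosed D := isClosed_iInter fun n =>
    (hUcl n).smul_of_ne_zero (hlampos n).ne'
  have hDbd : Bornology.IsVonNBounded ℝ D := by
    intro V hV
    obtain ⟨n, -, hn⟩ := hB.toHasBasis.mem_iff.1 hV
    refine Absorbs.mono_left ?_ (hUB n |>.trans hn)
    rw [absorbs_iff_norm]
    refine ⟨lam n, fun c hc => (hDsub n).trans ?_⟩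
    exact (hUbal n).smul_mono (by rwa [Real.norm_eq_abs, abs_of_pos (hlampos n)])
  refine ⟨D, hDcl, hDbd, hDconv, hDbal, hAsub, ?_⟩
  intro x hx W
  constructor
  · -- hard direction: gauge-ball condition gives a topological neighborhood
    rintro ⟨ε, hε, hball⟩
    obtain ⟨N, hN⟩ := exists_nat_ge (4 / ε)
    set V : Set E := ⋂ n ∈ Finset.range (N + 1),
      (fun z => z - x) ⁻¹' ((ε / 2 * lam n) • U n) with hVdef
    have hcpos : ∀ n : ℕ, (0 : ℝ) < ε / 2 * lam n := fun n =>
      mul_pos (by positivity) (hlampos n)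
    have hVnhd : V ∈ 𝓝 x := by
      rw [hVdef, Filter.biInter_finset_mem]
      intro n _
      have h1 : (ε / 2 * lam n) • U n ∈ 𝓝 (0 : E) :=
        (set_smul_mem_nhds_zero_iff (hcpos n).ne').2 (hUnhd n)
      have hcont : ContinuousAt (fun z : E => z - x) x :=
        (continuous_id.sub continuous_const).continuousAt
      refine hcont.preimage_mem_nhds ?_
      show (ε / 2 * lam n) • U n ∈ 𝓝 (x - x)
      rw [sub_self]
      exact h1
    refine ⟨V, hVnhd, ?_⟩
    rintro y ⟨hyV, hyA⟩
    refine hball ⟨hyA, ?_⟩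
    -- show `y - x ∈ (ε/2) • D`
    have hmem : y - x ∈ (ε / 2 : ℝ) • D := by
      have hhalf : (ε / 2 : ℝ) ≠ 0 := by positivity
      have hw : ∀ n : ℕ, y - x ∈ (ε / 2 * lam n) • U n := by
        intro n
        rcases le_or_gt n N with h | h
        · simp only [hVdef, mem_iInter, mem_preimage] at hyV
          exact hyV n (Finset.mem_range.2 (Nat.lt_succ_of_le h))
        · -- use boundedness of A
          have hy' : y ∈ ρ n • U n := hρ n (ρ n)
            (le_of_eq (Real.norm_eq_abs _ ▸ (abs_of_pos (hρpos n)).symm)) hyA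
          have hx' : x ∈ ρ n • U n := hρ n (ρ n)
            (le_of_eq (Real.norm_eq_abs _ ▸ (abs_of_pos (hρpos n)).symm)) hx
          have hsub2 : y - x ∈ (2 * ρ n) • U n := by
            have := aux_sub_mem_two_smul ((hUconv n).smul (ρ n)) ((hUbal n).smul (ρ n)) hy' hx'
            rwa [← mul_smul] at this
          refine ((hUbal n).smul_mono ?_) hsub2
          rw [Real.norm_eq_abs, Real.norm_eq_abs, abs_of_pos (mul_pos two_pos (hρpos n)),
            abs_of_pos (hcpos n)]
          have h4 : (4 : ℝ) / ε ≤ (n : ℝ) + 1 := by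
            refine hN.trans ?_
            have : (N : ℝ) ≤ (n : ℝ) := Nat.cast_le.2 h.le
            linarith
          have h4' : (4 : ℝ) ≤ ε * ((n : ℝ) + 1) := by
            rw [div_le_iff₀ hε] at h4
            linarith
          rw [hlam]
          have hρn := (hρpos n).le
          calc 2 * ρ n = (4 * ρ n) / 2 := by ring
          _ ≤ (ε * ((n : ℝ) + 1) * ρ n) / 2 := by gcongr
          _ = ε / 2 * (((n : ℝ) + 1) * ρ n) := by ring
      have hfix : (ε / 2 : ℝ) • (ε / 2 : ℝ)⁻¹ • (y - x) = y - x := by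
        rw [smul_smul, mul_inv_cancel₀ hhalf, one_smul]
      refine ⟨(ε / 2 : ℝ)⁻¹ • (y - x), ?_, hfix⟩
      refine mem_iInter.2 fun n => ?_
      obtain ⟨u, hu, hu'⟩ := hw n
      have hu'' : (ε / 2 * lam n) • u = y - x := hu'
      refine ⟨u, hu, ?_⟩
      show lam n • u = (ε / 2 : ℝ)⁻¹ • (y - x)
      rw [← hu'', smul_smul, ← mul_assoc, inv_mul_cancel₀ hhalf, one_mul]
    have : gauge D (y - x) ≤ ε / 2 := gauge_le_of_mem (by positivity) hmem
    linarith
  · -- easy direction: D is bounded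
    rintro ⟨V, hV, hVW⟩
    have hV0 : (fun z : E => x + z) ⁻¹' V ∈ 𝓝 (0 : E) := by
      rw [← map_add_left_nhds_zero x] at hV
      exact hV
    obtain ⟨r, hr, hrabs⟩ := (hDbd hV0).exists_pos
    have hrD : D ⊆ r • ((fun z : E => x + z) ⁻¹' V) :=
      hrabs r (le_of_eq (Real.norm_eq_abs _ ▸ (abs_of_pos hr).symm))
    refine ⟨1 / r, by positivity, ?_⟩
    rintro y ⟨hyA, hgauge⟩
    -- extract a scaling witness from the gauge bound
    have hne : ((2 : ℝ)) ∈ {t : ℝ | t ∈ Set.Ioi (0:ℝ) ∧ y - x ∈ t • D} := by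
      refine ⟨by norm_num, aux_sub_mem_two_smul hDconv hDbal (hAsub hyA) (hAsub hx)⟩
    have hlt : sInf {t : ℝ | t ∈ Set.Ioi (0:ℝ) ∧ y - x ∈ t • D} < 1 / r := by
      rw [← gauge_def]; exact hgauge
    obtain ⟨t, ⟨ht0, htD⟩, htr⟩ := exists_lt_of_csInf_lt ⟨2, hne⟩ hlt
    have ht0' : (0 : ℝ) < t := ht0
    -- y - x ∈ t • D ⊆ (1/r) • D ⊆ (1/r) • (r • preimage) = preimage
    have h1 : y - x ∈ (1 / r : ℝ) • D :=
      (hDbal.smul_mono (by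
        rw [Real.norm_eq_abs, Real.norm_eq_abs, abs_of_pos ht0', abs_of_pos (by positivity)]
        exact htr.le)) htD
    have h2 : y - x ∈ (fun z : E => x + z) ⁻¹' V := by
      have := Set.smul_set_mono hrD h1
      rwa [smul_smul, one_div, inv_mul_cancel₀ hr.ne', one_smul] at this
    have hyV : y ∈ V := by simpa using h2
    exact hVW ⟨hyV, hyA⟩
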